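/- Let ω_1, …, ω_k be independent random vectors in ℝⁿ whose coordinates are i.i.d. taking values +σ and −σ each with probability 1/2 (scaled Rademacher), where σ > 0, and set Ω = [ω_1, …, ω_k] ∈ ℝ^{n×k}. Then for every fixed v ∈ ℝⁿ, E[‖Ω Ωᵀ v‖²] = k σ⁴ (n + k − 1) ‖v‖². -/

import Mathlib

open MeasureTheory ProbabilityTheory Matrix

private lemma rademacher_sum_eval {n k : ℕ} (σ : ℝ) (v : Fin n → ℝ) :
    ∑ a : Fin n, ∑ p : Fin k × Fin n, ∑ q : Fin k × Fin n,
      (σ ^ 4 * (if p.1 = q.1 then (if p.2 = q.2 then (1:ℝ) else 0)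
        else (if a = p.2 then 1 else 0) * (if a = q.2 then 1 else 0))) * (v p.2 * v q.2)
    = (k : ℝ) * σ ^ 4 * ((n : ℝ) + (k : ℝ) - 1) * ∑ a, (v a) ^ 2 := by
  have key : ∀ (a : Fin n) (i j : Fin k),
      (∑ b : Fin n, ∑ c : Fin n,
        (σ ^ 4 * (if i = j then (if b = c then (1:ℝ) else 0)
          else (if a = b then 1 else 0) * (if a = c then 1 else 0))) * (v b * v c))
      = if i = j then σ ^ 4 * ∑ b, v b ^ 2 else σ ^ 4 * v a ^ 2 := by
    intro a i j
    by_cases hij : i = j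
    · subst hij
      simp only [eq_self_iff_true, if_true]
      have h1 : ∀ b : Fin n, ∑ c : Fin n,
          (σ ^ 4 * (if b = c then (1:ℝ) else 0)) * (v b * v c) = σ ^ 4 * v b ^ 2 := by
        intro b
        rw [Finset.sum_eq_single b]
        · rw [if_pos rfl]; ring
        · intro c _ hc; rw [if_neg (Ne.symm hc)]; try ring
        · simp
      rw [Finset.sum_congr rfl fun b _ => h1 b, Finset.mul_sum]
    · simp only [if_neg hij]
      have h1 : ∀ b : Fin n, ∑ c : Fin n,
          (σ ^ 4 * ((if a = b then (1:ℝ) else 0) * (if a = c then 1 else 0))) * (v b * v c)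
          = (if a = b then (1:ℝ) else 0) * (σ ^ 4 * (v b * v a)) := by
        intro b
        rw [Finset.sum_eq_single a]
        · rw [if_pos rfl]; ring
        · intro c _ hc; rw [if_neg (Ne.symm hc)]; try ring
        · simp
      rw [Finset.sum_congr rfl fun b _ => h1 b, Finset.sum_eq_single a]
      · rw [if_pos rfl]; ring
      · intro b _ hb; rw [if_neg (Ne.symm hb)]; try ring
      · simp
  have step : ∀ a : Fin n,
      (∑ p : Fin k × Fin n, ∑ q : Fin k × Fin n,
        (σ ^ 4 * (if p.1 = q.1 then (if p.2 = q.2 then (1:ℝ) else 0)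
          else (if a = p.2 then 1 else 0) * (if a = q.2 then 1 else 0))) * (v p.2 * v q.2))
      = ∑ i : Fin k, ∑ j : Fin k, (if i = j then σ ^ 4 * ∑ b, v b ^ 2 else σ ^ 4 * v a ^ 2) := by
    intro a
    simp only [Fintype.sum_prod_type]
    refine Finset.sum_congr rfl fun i _ => ?_
    rw [Finset.sum_comm]
    exact Finset.sum_congr rfl fun j _ => key a i j
  rw [Finset.sum_congr rfl fun a _ => step a]
  set Q : ℝ := ∑ b, v b ^ 2 with hQ
  have trick : ∀ a : Fin n, ∀ i : Fin k,
      (∑ j : Fin k, if i = j then σ ^ 4 * Q else σ ^ 4 * v a ^ 2)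
      = (k : ℝ) * (σ ^ 4 * v a ^ 2) + (σ ^ 4 * Q - σ ^ 4 * v a ^ 2) := by
    intro a i
    have h : ∀ j : Fin k, (if i = j then σ ^ 4 * Q else σ ^ 4 * v a ^ 2)
        = σ ^ 4 * v a ^ 2 + (if i = j then σ ^ 4 * Q - σ ^ 4 * v a ^ 2 else 0) := fun j => by
      split_ifs <;> ring
    simp only [h]
    rw [Finset.sum_add_distrib, Finset.sum_const, Finset.sum_ite_eq,
      if_pos (Finset.mem_univ i), Finset.card_univ, Fintype.card_fin, nsmul_eq_mul]
  simp only [trick, Finset.sum_const, Finset.card_univ, Fintype.card_fin, nsmul_eq_mul]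
  have expand : ∀ a : Fin n,
      (k : ℝ) * ((k : ℝ) * (σ ^ 4 * v a ^ 2) + (σ ^ 4 * Q - σ ^ 4 * v a ^ 2))
      = ((k : ℝ) * (k : ℝ) * σ ^ 4 - (k : ℝ) * σ ^ 4) * v a ^ 2 + (k : ℝ) * (σ ^ 4 * Q) :=
    fun a => by ring
  simp only [expand]
  rw [Finset.sum_add_distrib, ← Finset.mul_sum, Finset.sum_const, Finset.card_univ,
    Fintype.card_fin, nsmul_eq_mul, ← hQ]
  ring

/-- Second-moment identity for the stochastic direction `g = Ω Ωᵀ v` when the entries of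
`Ω` are i.i.d. scaled Rademacher (`±σ` with probability 1/2 each):
`E[‖Ω Ωᵀ v‖²] = k σ⁴ (n + k - 1) ‖v‖²`. -/
theorem second_moment_rademacher
    {n k : ℕ} (hn : 0 < n) (hk : 0 < k)
    {Ω : Type*} [MeasureSpace Ω] [IsProbabilityMeasure (ℙ : Measure Ω)]
    (σ : ℝ) (hσ : 0 < σ)
    (ω : Fin k → Ω → Fin n → ℝ)
    (hmeas : ∀ i a, Measurable fun x => ω i x a)
    (hindep : iIndepFun
      (fun p : Fin k × Fin n => fun x => ω p.1 x p.2) ℙ)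
    (hlaw₁ : ∀ i a, ℙ {x | ω i x a = σ} = 1 / 2)
    (hlaw₂ : ∀ i a, ℙ {x | ω i x a = -σ} = 1 / 2) :
    ∀ v : Fin n → ℝ,
      (∫ x, ∑ a, (((Matrix.of fun r c => ω c x r) *
          (Matrix.of fun r c => ω c x r)ᵀ).mulVec v a) ^ 2)
        = (k : ℝ) * σ ^ 4 * ((n : ℝ) + (k : ℝ) - 1) * ∑ a, (v a) ^ 2 := by
  -- measurability of the entries
  have hXm : ∀ p : Fin k × Fin n, Measurable fun x => ω p.1 x p.2 := fun p => hmeas p.1 p.2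
  have hA : ∀ (i : Fin k) (a : Fin n), MeasurableSet {x | ω i x a = σ} :=
    fun i a => (hmeas i a) (measurableSet_singleton σ)
  have hB : ∀ (i : Fin k) (a : Fin n), MeasurableSet {x | ω i x a = -σ} :=
    fun i a => (hmeas i a) (measurableSet_singleton (-σ))
  -- the union of the two value sets has full measure
  have hcompl : ∀ (i : Fin k) (a : Fin n),
      ℙ ({x | ω i x a = σ} ∪ {x | ω i x a = -σ})ᶜ = 0 := by
    intro i a
    have hd : Disjoint {x | ω i x a = σ} {x | ω i x a = -σ} := by
      rw [Set.disjoint_left]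
      intro x h1 h2
      simp only [Set.mem_setOf_eq] at h1 h2
      rw [h1] at h2
      linarith
    rw [measure_compl ((hA i a).union (hB i a)) (measure_ne_top _ _),
      measure_union hd (hB i a), hlaw₁ i a, hlaw₂ i a]
    rw [one_div, ENNReal.inv_two_add_inv_two, measure_univ, tsub_self]
  -- a.e., every entry is `σ` or `-σ`
  have hval : ∀ᵐ x ∂(ℙ : Measure Ω), ∀ (i : Fin k) (a : Fin n),
      ω i x a = σ ∨ ω i x a = -σ := by
    rw [ae_all_iff]
    intro i
    rw [ae_all_iff]
    intro a
    rw [ae_iff]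
    refine measure_mono_null (fun x hx => ?_) (hcompl i a)
    simp only [Set.mem_setOf_eq, not_or] at hx
    simp only [Set.mem_compl_iff, Set.mem_union, Set.mem_setOf_eq, not_or]
    exact hx
  have habs : ∀ᵐ x ∂(ℙ : Measure Ω), ∀ (i : Fin k) (a : Fin n), |ω i x a| ≤ σ := by
    filter_upwards [hval] with x hx i a
    rcases hx i a with h | h <;> rw [h] <;> simp [abs_of_nonneg hσ.le]
  -- integrability facts
  have hint1 : ∀ (i : Fin k) (a : Fin n), Integrable (fun x => ω i x a) ℙ := by
    intro i a
    refine (memLp_top_of_bound (hmeas i a).aestronglyMeasurable σ ?_).integrable le_top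
    filter_upwards [habs] with x hx
    rw [Real.norm_eq_abs]
    exact hx i a
  have hint2 : ∀ (i : Fin k) (a : Fin n) (j : Fin k) (b : Fin n),
      Integrable (fun x => ω i x a * ω j x b) ℙ := by
    intro i a j b
    refine (memLp_top_of_bound ((hmeas i a).mul (hmeas j b)).aestronglyMeasurable
      (σ * σ) ?_).integrable le_top
    filter_upwards [habs] with x hx
    rw [Real.norm_eq_abs, Pi.mul_apply, abs_mul]
    exact mul_le_mul (hx i a) (hx j b) (abs_nonneg _) hσ.le
  have hint4 : ∀ (i : Fin k) (a : Fin n) (j : Fin k) (b : Fin n)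
      (l : Fin k) (c : Fin n) (m : Fin k) (d : Fin n),
      Integrable (fun x => ω i x a * ω j x b * (ω l x c * ω m x d)) ℙ := by
    intro i a j b l c m d
    refine (memLp_top_of_bound
      ((((hmeas i a).mul (hmeas j b)).mul ((hmeas l c).mul (hmeas m d))).aestronglyMeasurable)
      (σ * σ * (σ * σ)) ?_).integrable le_top
    filter_upwards [habs] with x hx
    rw [Real.norm_eq_abs, Pi.mul_apply, Pi.mul_apply, Pi.mul_apply, abs_mul, abs_mul, abs_mul]
    exact mul_le_mul
      (mul_le_mul (hx i a) (hx j b) (abs_nonneg _) hσ.le)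
      (mul_le_mul (hx l c) (hx m d) (abs_nonneg _) hσ.le)
      (mul_nonneg (abs_nonneg _) (abs_nonneg _)) (mul_nonneg hσ.le hσ.le)
  -- mean zero
  have hmean : ∀ (i : Fin k) (a : Fin n), (∫ x, ω i x a ∂ℙ) = 0 := by
    intro i a
    have hmem : ({x | ω i x a = σ} ∪ {x | ω i x a = -σ}) ∈ ae (ℙ : Measure Ω) :=
      mem_ae_iff.2 (hcompl i a)
    have heq : (fun x => ω i x a) =ᵐ[ℙ]
        fun x => Set.indicator {x | ω i x a = σ} (fun _ => σ) x
          + Set.indicator {x | ω i x a = -σ} (fun _ => -σ) x := by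
      refine Filter.eventuallyEq_of_mem hmem fun x hx => ?_
      rcases hx with h | h
      · have h1 : x ∈ {x | ω i x a = σ} := h
        have h2 : x ∉ {x | ω i x a = -σ} := by
          intro h2
          simp only [Set.mem_setOf_eq] at h1 h2
          rw [h1] at h2; linarith
        rw [Set.indicator_of_mem h1, Set.indicator_of_notMem h2]
        simpa using h
      · have h2 : x ∈ {x | ω i x a = -σ} := h
        have h1 : x ∉ {x | ω i x a = σ} := by
          intro h1
          simp only [Set.mem_setOf_eq] at h1 h2
          rw [h1] at h2; linarith
        rw [Set.indicator_of_notMem h1, Set.indicator_of_mem h2]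
        simpa using h
    rw [integral_congr_ae heq,
      integral_add ((integrable_const σ).indicator (hA i a))
        ((integrable_const (-σ)).indicator (hB i a)),
      integral_indicator_const _ (hA i a), integral_indicator_const _ (hB i a),
      measureReal_def, measureReal_def, hlaw₁ i a, hlaw₂ i a]
    norm_num
  -- second mixed moments
  have hpair : ∀ (i : Fin k) (a : Fin n) (j : Fin k) (b : Fin n),
      (∫ x, ω i x a * ω j x b ∂ℙ) = if i = j ∧ a = b then σ ^ 2 else 0 := by
    intro i a j b
    by_cases hij : i = j ∧ a = b
    · obtain ⟨h1, h2⟩ := hij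
      subst h1; subst h2
      rw [if_pos ⟨rfl, rfl⟩]
      have heq : (fun x => ω i x a * ω i x a) =ᵐ[ℙ] fun _ => σ ^ 2 := by
        filter_upwards [hval] with x hx
        rcases hx i a with h | h <;> rw [h] <;> ring
      rw [integral_congr_ae heq, integral_const]
      simp
    · rw [if_neg hij]
      have hne : (i, a) ≠ (j, b) := by
        simpa [Prod.ext_iff] using hij
      have hI : IndepFun (fun x => ω i x a) (fun x => ω j x b) ℙ := hindep.indepFun hne
      have h := hI.integral_fun_mul_eq_mul_integral (hint1 i a).1 (hint1 j b).1
      calc (∫ x, ω i x a * ω j x b ∂ℙ)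
          = (∫ x, ω i x a ∂ℙ) * ∫ x, ω j x b ∂ℙ := h
        _ = 0 := by rw [hmean i a, hmean j b]; ring
  -- the fourth-moment identity
  have E4 : ∀ (i j : Fin k) (a b c : Fin n),
      (∫ x, ω i x a * ω i x b * (ω j x a * ω j x c) ∂ℙ)
      = σ ^ 4 * (if i = j then (if b = c then (1:ℝ) else 0)
          else (if a = b then 1 else 0) * (if a = c then 1 else 0)) := by
    intro i j a b c
    by_cases hij : i = j
    · subst hij
      rw [if_pos rfl]
      have heq : (fun x => ω i x a * ω i x b * (ω i x a * ω i x c)) =ᵐ[ℙ]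
          fun x => σ ^ 2 * (ω i x b * ω i x c) := by
        filter_upwards [hval] with x hx
        rcases hx i a with h | h <;> rw [show ω i x a * ω i x b * (ω i x a * ω i x c)
          = ω i x a * ω i x a * (ω i x b * ω i x c) from by ring, h] <;> ring
      rw [integral_congr_ae heq, integral_const_mul, hpair i b i c]
      by_cases hbc : b = c
      · subst hbc; rw [if_pos ⟨rfl, rfl⟩, if_pos rfl]; ring
      · rw [if_neg (fun h => hbc h.2), if_neg hbc]; ring
    · rw [if_neg hij]
      by_cases hab : a = b
      · subst hab
        by_cases hac : a = c
        · subst hac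
          have heq : (fun x => ω i x a * ω i x a * (ω j x a * ω j x a)) =ᵐ[ℙ]
              fun _ => σ ^ 2 * σ ^ 2 := by
            filter_upwards [hval] with x hx
            rcases hx i a with h | h <;> rcases hx j a with h' | h' <;> rw [h, h'] <;> ring
          have hone : (if a = a then (1:ℝ) else 0) = 1 := if_pos rfl
          rw [integral_congr_ae heq, integral_const, hone, measureReal_def, measure_univ]
          simp only [ENNReal.toReal_one, one_smul]
          ring
        · have heq : (fun x => ω i x a * ω i x a * (ω j x a * ω j x c)) =ᵐ[ℙ]
              fun x => σ ^ 2 * (ω j x a * ω j x c) := by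
            filter_upwards [hval] with x hx
            rcases hx i a with h | h <;> rw [h] <;> ring
          rw [integral_congr_ae heq, integral_const_mul, hpair j a j c,
            if_neg (fun h => hac h.2), if_pos rfl, if_neg hac]
          ring
      · by_cases hac : a = c
        · subst hac
          have heq : (fun x => ω i x a * ω i x b * (ω j x a * ω j x a)) =ᵐ[ℙ]
              fun x => σ ^ 2 * (ω i x a * ω i x b) := by
            filter_upwards [hval] with x hx
            rcases hx j a with h | h <;> rw [h] <;> ring
          rw [integral_congr_ae heq, integral_const_mul, hpair i a i b,
            if_neg (fun h => hab h.2), if_neg hab, if_pos rfl]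
          ring
        · have hI : IndepFun
              ((fun p : Fin k × Fin n => fun x => ω p.1 x p.2) (i, a)
                * (fun p : Fin k × Fin n => fun x => ω p.1 x p.2) (i, b))
              ((fun p : Fin k × Fin n => fun x => ω p.1 x p.2) (j, a)
                * (fun p : Fin k × Fin n => fun x => ω p.1 x p.2) (j, c)) ℙ :=
            hindep.indepFun_mul_mul hXm (i, a) (i, b) (j, a) (j, c)
              (by simp [Prod.ext_iff, hij]) (by simp [Prod.ext_iff, hij])
              (by simp [Prod.ext_iff, hij]) (by simp [Prod.ext_iff, hij])
          have h2 : (∫ x, ω i x a * ω i x b * (ω j x a * ω j x c) ∂ℙ)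
              = (∫ x, ω i x a * ω i x b ∂ℙ) * ∫ x, ω j x a * ω j x c ∂ℙ :=
            hI.integral_mul_eq_mul_integral (hint2 i a i b).1 (hint2 j a j c).1
          rw [h2, hpair i a i b, hpair j a j c, if_neg (fun h => hab h.2),
            if_neg (fun h => hac h.2), if_neg hab, if_neg hac]
          ring
  intro v
  -- pointwise expansion of the integrand
  have hexpand : ∀ x : Ω,
      (∑ a, (((Matrix.of fun r c => ω c x r) *
          (Matrix.of fun r c => ω c x r)ᵀ).mulVec v a) ^ 2)
      = ∑ a, ∑ p : Fin k × Fin n, ∑ q : Fin k × Fin n,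
          (ω p.1 x a * ω p.1 x p.2 * (ω q.1 x a * ω q.1 x q.2)) * (v p.2 * v q.2) := by
    intro x
    refine Finset.sum_congr rfl fun a _ => ?_
    have h1 : ((Matrix.of fun r c => ω c x r) *
        (Matrix.of fun r c => ω c x r)ᵀ).mulVec v a
        = ∑ p : Fin k × Fin n, ω p.1 x a * ω p.1 x p.2 * v p.2 := by
      simp only [Matrix.mulVec, dotProduct, Matrix.mul_apply, Matrix.transpose_apply,
        Matrix.of_apply, Finset.sum_mul, Fintype.sum_prod_type]
      exact Finset.sum_comm
    rw [h1, sq, Finset.sum_mul_sum]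
    exact Finset.sum_congr rfl fun p _ => Finset.sum_congr rfl fun q _ => by ring
  rw [integral_congr_ae (Filter.Eventually.of_forall hexpand)]
  have hI1 : ∀ (a : Fin n) (p q : Fin k × Fin n),
      Integrable (fun x => (ω p.1 x a * ω p.1 x p.2 * (ω q.1 x a * ω q.1 x q.2))
        * (v p.2 * v q.2)) ℙ :=
    fun a p q => (hint4 p.1 a p.1 p.2 q.1 a q.1 q.2).mul_const _
  rw [integral_finset_sum _ (fun a _ => integrable_finset_sum _ fun p _ =>
    integrable_finset_sum _ fun q _ => hI1 a p q)]
  have hswap : ∀ a : Fin n,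
      (∫ x, ∑ p : Fin k × Fin n, ∑ q : Fin k × Fin n,
        (ω p.1 x a * ω p.1 x p.2 * (ω q.1 x a * ω q.1 x q.2)) * (v p.2 * v q.2) ∂ℙ)
      = ∑ p : Fin k × Fin n, ∑ q : Fin k × Fin n,
          (σ ^ 4 * (if p.1 = q.1 then (if p.2 = q.2 then (1:ℝ) else 0)
            else (if a = p.2 then 1 else 0) * (if a = q.2 then 1 else 0))) * (v p.2 * v q.2) := by
    intro a
    rw [integral_finset_sum _ (fun p _ => integrable_finset_sum _ fun q _ => hI1 a p q)]
    refine Finset.sum_congr rfl fun p _ => ?_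
    rw [integral_finset_sum _ (fun q _ => hI1 a p q)]
    refine Finset.sum_congr rfl fun q _ => ?_
    rw [integral_mul_const, E4 p.1 q.1 a p.2 q.2]
  rw [Finset.sum_congr rfl fun a _ => hswap a]
  exact rademacher_sum_eval σ v
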